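/- Let ε > 0, a, b ∈ ℝ, ν ∈ ℝ², and set N = (N₁, N₂) = (1, −b) ∈ ℝ². Let A : ℝ² × ℝ → ℝ² × ℝ be the linear map A(h, e) = (−εa h₁ + ε⟨N, h⟩ν₁ + N₂ e, −εa h₂ + ε⟨N, h⟩ν₂ − N₁ e, −εa e + N₂ h₁ − N₁ h₂). Then the characteristic polynomial of A equals ((X + εa)² − ‖N‖²) · (X + ε(a − ⟨ν, N⟩)), where ‖N‖² = 1 + b². In particular, A has eigenvalues −εa − ‖N‖, −ε(a − ⟨ν, N⟩), and −εa + ‖N‖; if a = ⟨ν, N⟩, the middle eigenvalue is 0. -/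

import Mathlib

open Polynomial

open Matrix in
/-- Over a field and a finite-dimensional space, every root of the characteristic polynomial
of an endomorphism is an eigenvalue. -/
lemma charpoly_root_hasEigenvalue {K V : Type*} [Field K] [AddCommGroup V] [Module K V]
    [FiniteDimensional K V]
    (φ : Module.End K V) (μ : K) (h : φ.charpoly.IsRoot μ) : φ.HasEigenvalue μ := by
  classical
  let b := Module.finBasis K V
  set M := LinearMap.toMatrix b b φ with hM
  have hev : Polynomial.eval μ M.charpoly = 0 := by
    rw [LinearMap.charpoly_toMatrix]; exact h
  have hmap : (charmatrix M).map (Polynomial.evalRingHom μ) = μ • (1 : Matrix _ _ K) - M := by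
    ext i j
    by_cases hij : i = j
    · subst hij; simp [charmatrix_apply_eq]
    · simp [charmatrix_apply_ne _ _ _ hij, Matrix.one_apply_ne hij]
  have hdet0 : (μ • (1 : Matrix _ _ K) - M).det = 0 := by
    rw [← hmap, ← RingHom.mapMatrix_apply, ← RingHom.map_det]
    simpa [Matrix.charpoly] using hev
  have hdet : LinearMap.det (φ - μ • (1 : Module.End K V)) = 0 := by
    rw [← LinearMap.det_toMatrix b]
    have h1 : LinearMap.toMatrix b b (φ - μ • 1) = -(μ • 1 - M) := by
      rw [map_sub, _root_.map_smul, LinearMap.toMatrix_one, neg_sub, hM]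
    rw [h1, Matrix.det_neg, hdet0, mul_zero]
  have hker := LinearMap.bot_lt_ker_of_det_eq_zero hdet
  obtain ⟨x, hx, hx0⟩ := (Submodule.ne_bot_iff _).mp hker.ne'
  refine Module.End.hasEigenvalue_of_hasEigenvector ⟨?_, hx0⟩
  rw [Module.End.mem_eigenspace_iff]
  have := LinearMap.mem_ker.mp hx
  simpa [sub_eq_zero] using this

open Matrix in
/-- The boundary matrix `−εa I₃ + N₁A₁⁻(ν) + N₂A₂⁻(ν)` of the reduced 2D vacuum Maxwell
system, viewed as the linear map
`A(h, e) = (−εa h₁ + ε⟨N, h⟩ν₁ + N₂ e, −εa h₂ + ε⟨N, h⟩ν₂ − N₁ e, −εa e + N₂ h₁ − N₁ h₂)`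
with `N = (1, −b)`, has characteristic polynomial
`((X + εa)² − ‖N‖²)(X + ε(a − ⟨ν, N⟩))`, where `‖N‖² = 1 + b²`; in particular it has
eigenvalues `−εa − ‖N‖`, `−ε(a − ⟨ν, N⟩)`, `−εa + ‖N‖`, and if `a = ⟨ν, N⟩` the middle
eigenvalue is `0`. -/
theorem stmt_3 (ε a b : ℝ) (hε : 0 < ε) (ν : Fin 2 → ℝ)
    (N : Fin 2 → ℝ) (hN : N = ![1, -b])
    (A : ((Fin 2 → ℝ) × ℝ) →ₗ[ℝ] ((Fin 2 → ℝ) × ℝ))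
    (hA : ∀ u : (Fin 2 → ℝ) × ℝ,
      A u = (![-(ε * a) * u.1 0 + ε * (∑ i, N i * u.1 i) * ν 0 + N 1 * u.2,
              -(ε * a) * u.1 1 + ε * (∑ i, N i * u.1 i) * ν 1 - N 0 * u.2],
             -(ε * a) * u.2 + N 1 * u.1 0 - N 0 * u.1 1)) :
    A.charpoly = ((X + C (ε * a)) ^ 2 - C (1 + b ^ 2))
        * (X + C (ε * (a - ∑ i, ν i * N i))) ∧
    Module.End.HasEigenvalue A (-(ε * a) - Real.sqrt (1 + b ^ 2)) ∧
    Module.End.HasEigenvalue A (-(ε * (a - ∑ i, ν i * N i))) ∧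
    Module.End.HasEigenvalue A (-(ε * a) + Real.sqrt (1 + b ^ 2)) ∧
    (a = ∑ i, ν i * N i → Module.End.HasEigenvalue A 0) := by
  classical
  -- the characteristic polynomial
  set B : Module.Basis (Fin 3) ℝ ((Fin 2 → ℝ) × ℝ) :=
    ((Pi.basisFun ℝ (Fin 2)).prod (Module.Basis.singleton (Fin 1) ℝ)).reindex finSumFinEquiv with hBdef
  have e0 : (finSumFinEquiv (m := 2) (n := 1)).symm (0 : Fin 3) = Sum.inl 0 := by decide
  have e1 : (finSumFinEquiv (m := 2) (n := 1)).symm (1 : Fin 3) = Sum.inl 1 := by decide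
  have e2 : (finSumFinEquiv (m := 2) (n := 1)).symm (2 : Fin 3) = Sum.inr 0 := by decide
  have hrepr : ∀ (x : (Fin 2 → ℝ) × ℝ) (i : Fin 3),
      B.repr x i = ![x.1 0, x.1 1, x.2] i := by
    intro x i
    fin_cases i <;>
      simp [hBdef, Module.Basis.repr_reindex_apply, e0, e1, e2, Module.Basis.prod_repr_inl,
        Module.Basis.prod_repr_inr, Pi.basisFun_repr, Module.Basis.singleton_repr]
  have hB : ∀ j : Fin 3,
      B j = ![((![1,0] : Fin 2 → ℝ), (0:ℝ)), (![0,1], 0), (![0,0], 1)] j := by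
    intro j
    fin_cases j <;>
    · refine Prod.ext ?_ ?_
      · funext i
        fin_cases i <;>
          simp [hBdef, Module.Basis.reindex_apply, e0, e1, e2, Module.Basis.prod_apply_inl_fst,
            Module.Basis.prod_apply_inr_fst, Pi.basisFun_apply]
      · simp [hBdef, Module.Basis.reindex_apply, e0, e1, e2, Module.Basis.prod_apply_inl_snd,
          Module.Basis.prod_apply_inr_snd, Module.Basis.singleton_apply]
  have hMat : LinearMap.toMatrix B B A =
      !![ε * ν 0 - ε * a, -(ε * b * ν 0), -b;
         ε * ν 1, -(ε * a) - ε * b * ν 1, -1;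
         -b, -1, -(ε * a)] := by
    ext i j
    rw [LinearMap.toMatrix_apply, hB, hrepr]
    fin_cases i <;> fin_cases j <;>
      simp [hA, hN, Fin.sum_univ_two] <;> ring
  have hP : A.charpoly = ((X + C (ε * a)) ^ 2 - C (1 + b ^ 2))
      * (X + C (ε * (a - ∑ i, ν i * N i))) := by
    rw [← LinearMap.charpoly_toMatrix A B, hMat, Matrix.charpoly, Matrix.det_fin_three]
    simp [charmatrix_apply, Matrix.diagonal, Fin.sum_univ_two, hN]
    ring
  -- the eigenvalues
  have h0 : (0:ℝ) ≤ 1 + b ^ 2 := by positivity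
  have hs : Real.sqrt (1 + b ^ 2) ^ 2 = 1 + b ^ 2 := Real.sq_sqrt h0
  have hmid : Module.End.HasEigenvalue A (-(ε * (a - ∑ i, ν i * N i))) := by
    apply charpoly_root_hasEigenvalue
    rw [hP]
    simp only [IsRoot.def, eval_mul, eval_sub, eval_add, eval_pow, eval_X, eval_C]
    rw [mul_eq_zero]; right; ring
  refine ⟨hP, ?_, hmid, ?_, ?_⟩
  · apply charpoly_root_hasEigenvalue
    rw [hP]
    simp only [IsRoot.def, eval_mul, eval_sub, eval_add, eval_pow, eval_X, eval_C]
    rw [mul_eq_zero]; left; linear_combination hs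
  · apply charpoly_root_hasEigenvalue
    rw [hP]
    simp only [IsRoot.def, eval_mul, eval_sub, eval_add, eval_pow, eval_X, eval_C]
    rw [mul_eq_zero]; left; linear_combination hs
  · intro h
    simpa [h] using hmid
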